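/- A nonzero restricted power series f ∈ ℤ_p{x} has only finitely many zeros in ℤ_p. -/

import Mathlib

open Filter

section aux

variable {p : ℕ} [Fact p.Prime]

private lemma sum_aux {c : ℕ → ℤ_[p]} (hc : Tendsto c atTop (nhds 0)) (x : ℤ_[p]) :
    Summable (fun i => c i * x ^ i) := by
  apply NonarchimedeanAddGroup.summable_of_tendsto_cofinite_zero
  rw [Nat.cofinite_eq_atTop]
  apply squeeze_zero_norm (a := fun i => ‖c i‖)
  · intro i
    rw [norm_mul]
    exact mul_le_of_le_one_right (norm_nonneg _) (PadicInt.norm_le_one _)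
  · simpa using hc.norm

/-- Norm bound on the re-expansion terms. -/
private lemma term_norm_le (a : ℕ → ℤ_[p]) (s : ℤ_[p]) (j k : ℕ) :
    ‖(((j + k).choose j : ℕ) : ℤ_[p]) * a (j + k) * s ^ k‖ ≤ ‖a (j + k)‖ := by
  rw [norm_mul, norm_mul]
  calc ‖(((j + k).choose j : ℕ) : ℤ_[p])‖ * ‖a (j + k)‖ * ‖s ^ k‖
      ≤ 1 * ‖a (j + k)‖ * 1 := by
        gcongr
        · exact PadicInt.norm_le_one _
        · exact PadicInt.norm_le_one _
    _ = ‖a (j + k)‖ := by ring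

private lemma d_summable (a : ℕ → ℤ_[p]) (ha : Tendsto a atTop (nhds 0)) (s : ℤ_[p]) (j : ℕ) :
    Summable (fun k => (((j + k).choose j : ℕ) : ℤ_[p]) * a (j + k) * s ^ k) := by
  apply NonarchimedeanAddGroup.summable_of_tendsto_cofinite_zero
  rw [Nat.cofinite_eq_atTop]
  apply squeeze_zero_norm (a := fun k => ‖a (j + k)‖) (term_norm_le a s j)
  have h1 : Tendsto (fun k : ℕ => j + k) atTop atTop :=
    tendsto_atTop_mono (fun k => Nat.le_add_left k j) tendsto_id
  simpa using (ha.comp h1).norm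

/-- The equivalence `(Σ n, Fin (n+1)) ≃ ℕ × ℕ`, `⟨n, j⟩ ↦ (j, n - j)`. -/
private def finPairEquiv : (Σ n : ℕ, Fin (n + 1)) ≃ ℕ × ℕ where
  toFun x := (x.2.1, x.1 - x.2.1)
  invFun q := ⟨q.1 + q.2, ⟨q.1, by omega⟩⟩
  left_inv := by
    rintro ⟨n, j, hj⟩
    refine Sigma.ext (by simp; omega) ?_
    rw [Fin.heq_ext_iff (by simp; omega)]
  right_inv := by
    rintro ⟨j, k⟩
    simp

/-- Key re-expansion lemma: the series re-expanded around `s` converges to the same value. -/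
private lemma shift_hasSum {a : ℕ → ℤ_[p]} (ha : Tendsto a atTop (nhds 0)) (s y : ℤ_[p]) :
    HasSum (fun j => (∑' k, (((j + k).choose j : ℕ) : ℤ_[p]) * a (j + k) * s ^ k) * y ^ j)
      (∑' i, a i * (s + y) ^ i) := by
  set g : ℕ × ℕ → ℤ_[p] :=
    fun q => ((((q.1 + q.2).choose q.1 : ℕ) : ℤ_[p]) * a (q.1 + q.2) * s ^ q.2) * y ^ q.1 with hgdef
  have hb : ∀ q : ℕ × ℕ, ‖g q‖ ≤ ‖a (q.1 + q.2)‖ := by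
    rintro ⟨j, k⟩
    calc ‖g (j, k)‖ = ‖(((j + k).choose j : ℕ) : ℤ_[p]) * a (j + k) * s ^ k‖ * ‖y ^ j‖ :=
          norm_mul _ _
      _ ≤ ‖(((j + k).choose j : ℕ) : ℤ_[p]) * a (j + k) * s ^ k‖ * 1 := by
          gcongr; exact PadicInt.norm_le_one _
      _ ≤ ‖a (j + k)‖ := by rw [mul_one]; exact term_norm_le a s j k
  -- summability of the double series
  have hsum : Tendsto (fun q : ℕ × ℕ => q.1 + q.2) cofinite atTop := by
    rw [Filter.tendsto_atTop]
    intro b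
    rw [Filter.eventually_cofinite]
    apply Set.Finite.subset (Set.finite_Icc ((0 : ℕ), (0 : ℕ)) (b, b))
    rintro ⟨j, k⟩ h
    simp only [not_le, Set.mem_setOf_eq] at h
    simp only [Set.mem_Icc, Prod.mk_le_mk]
    omega
  have hg : Summable g := by
    apply NonarchimedeanAddGroup.summable_of_tendsto_cofinite_zero
    apply squeeze_zero_norm (a := fun q : ℕ × ℕ => ‖a (q.1 + q.2)‖) hb
    have ha' : Tendsto a cofinite (nhds 0) := by rwa [Nat.cofinite_eq_atTop]
    simpa using ((ha.comp hsum).norm)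
  -- fiberwise sums
  have hfiber : ∀ j : ℕ,
      HasSum (fun k => g (j, k))
        ((∑' k, (((j + k).choose j : ℕ) : ℤ_[p]) * a (j + k) * s ^ k) * y ^ j) := by
    intro j
    exact (d_summable a ha s j).hasSum.mul_right (y ^ j)
  have hmain := hg.hasSum.prod_fiberwise hfiber
  -- compute the total sum via the sigma-equivalence
  have htotal : ∑' q, g q = ∑' i, a i * (s + y) ^ i := by
    rw [← finPairEquiv.tsum_eq g]
    have hg' : Summable (g ∘ finPairEquiv) := finPairEquiv.summable_iff.mpr hg
    rw [show (fun x : (Σ n : ℕ, Fin (n + 1)) => g (finPairEquiv x)) = g ∘ finPairEquiv from rfl]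
    rw [hg'.tsum_sigma' (fun n => (hasSum_fintype _).summable)]
    congr 1
    funext n
    rw [tsum_fintype]
    have : ∀ j : Fin (n + 1), (g ∘ finPairEquiv) ⟨n, j⟩
        = (((j.1 + (n - j.1)).choose j.1 : ℕ) : ℤ_[p]) * a (j.1 + (n - j.1)) * s ^ (n - j.1)
          * y ^ j.1 := fun j => rfl
    simp only [this]
    rw [Fin.sum_univ_eq_sum_range
      (fun j => (((j + (n - j)).choose j : ℕ) : ℤ_[p]) * a (j + (n - j)) * s ^ (n - j) * y ^ j)]
    calc ∑ j ∈ Finset.range (n + 1),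
          (((j + (n - j)).choose j : ℕ) : ℤ_[p]) * a (j + (n - j)) * s ^ (n - j) * y ^ j
        = ∑ j ∈ Finset.range (n + 1), a n * (y ^ j * s ^ (n - j) * ((n.choose j : ℕ) : ℤ_[p])) := by
          refine Finset.sum_congr rfl fun j hj => ?_
          have hjn : j + (n - j) = n := by
            have := Finset.mem_range.mp hj; omega
          rw [hjn]; ring
      _ = a n * (y + s) ^ n := by rw [← Finset.mul_sum, ← add_pow]
      _ = a n * (s + y) ^ n := by rw [add_comm y s]
  rwa [htotal] at hmain

private lemma vanish0 {a : ℕ → ℤ_[p]} (ha : Tendsto a atTop (nhds 0))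
    (h : ∀ x : ℤ_[p], x ≠ 0 → ∑' i, a i * x ^ i = 0) : a 0 = 0 := by
  have hp : (p : ℤ_[p]) ≠ 0 := by
    exact_mod_cast Nat.cast_ne_zero.mpr (Fact.out : p.Prime).ne_zero
  have key : ∀ m : ℕ, ‖a 0‖ ≤ ‖(p : ℤ_[p])‖ ^ (m + 1) := by
    intro m
    set x : ℤ_[p] := (p : ℤ_[p]) ^ (m + 1) with hx
    have hxne : x ≠ 0 := pow_ne_zero _ hp
    have hxle : ‖x‖ ≤ 1 := PadicInt.norm_le_one x
    have hsum := sum_aux ha x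
    have h0 := h x hxne
    rw [hsum.tsum_eq_zero_add] at h0
    have hval : a 0 = -∑' n, a (n + 1) * x ^ (n + 1) := by
      have := eq_neg_of_add_eq_zero_left h0
      simpa using this
    rw [show ‖(p : ℤ_[p])‖ ^ (m + 1) = ‖x‖ by rw [hx, norm_pow]]
    rw [hval, norm_neg]
    apply IsUltrametricDist.norm_tsum_le_of_forall_le_of_nonneg (norm_nonneg x)
    intro n
    calc ‖a (n + 1) * x ^ (n + 1)‖ = ‖a (n + 1)‖ * ‖x‖ ^ (n + 1) := by
          rw [norm_mul, norm_pow]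
      _ ≤ 1 * ‖x‖ ^ (n + 1) := by gcongr; exact PadicInt.norm_le_one _
      _ = ‖x‖ ^ (n + 1) := one_mul _
      _ ≤ ‖x‖ ^ 1 := pow_le_pow_of_le_one (norm_nonneg x) hxle (by omega)
      _ = ‖x‖ := pow_one _
  have hplt : ‖(p : ℤ_[p])‖ < 1 := by
    rw [PadicInt.norm_p]
    have : (1 : ℝ) < p := by exact_mod_cast (Fact.out : p.Prime).one_lt
    rw [inv_lt_one_iff₀]; right; exact this
  have hlim : Tendsto (fun m : ℕ => ‖(p : ℤ_[p])‖ ^ (m + 1)) atTop (nhds 0) := by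
    have := tendsto_pow_atTop_nhds_zero_of_lt_one (norm_nonneg (p : ℤ_[p])) hplt
    exact this.comp (tendsto_atTop_mono (fun n => Nat.le_succ n) tendsto_id)
  have : ‖a 0‖ ≤ 0 := ge_of_tendsto' hlim key
  simpa using le_antisymm this (norm_nonneg _)

private lemma vanish {a : ℕ → ℤ_[p]} (ha : Tendsto a atTop (nhds 0))
    (h : ∀ x : ℤ_[p], x ≠ 0 → ∑' i, a i * x ^ i = 0) : ∀ i, a i = 0 := by
  intro i
  induction i generalizing a with
  | zero => exact vanish0 ha h
  | succ i IH =>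
    have hbt : Tendsto (fun n => a (n + 1)) atTop (nhds 0) :=
      ha.comp (tendsto_atTop_mono (fun n => Nat.le_succ n) tendsto_id)
    refine IH hbt ?_
    intro x hx
    have h0 := h x hx
    have hsum := sum_aux ha x
    rw [hsum.tsum_eq_zero_add] at h0
    have ha0 : a 0 = 0 := vanish0 ha h
    have h1 : ∑' n, a (n + 1) * x ^ (n + 1) = 0 := by
      simpa [ha0] using h0
    have hsum2 : Summable (fun n => a (n + 1) * x ^ n) := sum_aux hbt x
    have h2 : (∑' n, a (n + 1) * x ^ n) * x = 0 := by
      rw [← hsum2.tsum_mul_right x, ← h1]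
      congr 1; funext n; rw [pow_succ]; ring
    exact (mul_eq_zero.mp h2).resolve_right hx

end aux

/-- A nonzero restricted power series over `ℤ_p` has only finitely many zeros in `ℤ_p`. -/
theorem stmt_16 (p : ℕ) [Fact p.Prime] (a : ℕ → ℤ_[p])
    (ha : Tendsto a atTop (nhds 0)) (hfne : ∃ i, a i ≠ 0) :
    {x : ℤ_[p] | (∑' i : ℕ, a i * x ^ i) = 0}.Finite := by
  by_contra hfin
  have hinf : {x : ℤ_[p] | (∑' i : ℕ, a i * x ^ i) = 0}.Infinite := hfin
  obtain ⟨s, hs⟩ := hinf.exists_accPt_principal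
  set d : ℕ → ℤ_[p] :=
    fun j => ∑' k, (((j + k).choose j : ℕ) : ℤ_[p]) * a (j + k) * s ^ k with hd
  have hA : ∀ y : ℤ_[p], HasSum (fun j => d j * y ^ j) (∑' i, a i * (s + y) ^ i) :=
    fun y => shift_hasSum ha s y
  by_cases hdz : ∀ j, d j = 0
  · have hzero : ∀ x : ℤ_[p], x ≠ 0 → ∑' i, a i * x ^ i = 0 := by
      intro x _
      have h := hA (x - s)
      rw [add_sub_cancel] at h
      simp only [hdz, zero_mul] at h
      exact (h.unique hasSum_zero)
    obtain ⟨i, hi⟩ := hfne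
    exact hi (vanish ha hzero i)
  · push_neg at hdz
    classical
    set m := Nat.find hdz with hm
    have hdm : d m ≠ 0 := Nat.find_spec hdz
    have hlt : ∀ j, j < m → d j = 0 := fun j hj => not_not.mp (Nat.find_min hdz hj)
    have key : ∀ y : ℤ_[p], y ≠ 0 → ‖y‖ < ‖d m‖ → (∑' i, a i * (s + y) ^ i) ≠ 0 := by
      intro y hy0 hylt hzero
      have hS := hA y
      rw [hzero] at hS
      have hsum : Summable fun j => d j * y ^ j := hS.summable
      have hval : ∑' j, d j * y ^ j = 0 := hS.tsum_eq
      have hsplit := (hsum.sum_add_tsum_nat_add (m + 1)).trans hval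
      have hfs : ∑ j ∈ Finset.range (m + 1), d j * y ^ j = d m * y ^ m := by
        rw [Finset.sum_eq_single m]
        · intro b hb hbm
          rw [hlt b (by have := Finset.mem_range.mp hb; omega), zero_mul]
        · intro hm'
          exact absurd (Finset.self_mem_range_succ m) hm'
      rw [hfs] at hsplit
      have hR : ‖∑' j, d (j + (m + 1)) * y ^ (j + (m + 1))‖ ≤ ‖y‖ ^ (m + 1) := by
        apply IsUltrametricDist.norm_tsum_le_of_forall_le_of_nonneg (by positivity)
        intro j
        calc ‖d (j + (m + 1)) * y ^ (j + (m + 1))‖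
            = ‖d (j + (m + 1))‖ * ‖y‖ ^ (j + (m + 1)) := by
              rw [norm_mul, norm_pow]
          _ ≤ 1 * ‖y‖ ^ (j + (m + 1)) := by gcongr; exact PadicInt.norm_le_one _
          _ = ‖y‖ ^ (j + (m + 1)) := one_mul _
          _ ≤ ‖y‖ ^ (m + 1) :=
              pow_le_pow_of_le_one (norm_nonneg y) (PadicInt.norm_le_one y) (by omega)
      have hy0' : (0 : ℝ) < ‖y‖ := norm_pos_iff.mpr hy0
      have hRlt : ‖∑' j, d (j + (m + 1)) * y ^ (j + (m + 1))‖ < ‖d m * y ^ m‖ := by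
        rw [norm_mul, norm_pow]
        calc ‖∑' j, d (j + (m + 1)) * y ^ (j + (m + 1))‖ ≤ ‖y‖ ^ (m + 1) := hR
          _ = ‖y‖ * ‖y‖ ^ m := by rw [pow_succ]; ring
          _ < ‖d m‖ * ‖y‖ ^ m := mul_lt_mul_of_pos_right hylt (pow_pos hy0' m)
      have : d m * y ^ m = -∑' j, d (j + (m + 1)) * y ^ (j + (m + 1)) :=
        eq_neg_of_add_eq_zero_left hsplit
      rw [this, norm_neg] at hRlt
      exact lt_irrefl _ hRlt
    rw [accPt_iff_nhds] at hs
    have hpos : (0 : ℝ) < ‖d m‖ := norm_pos_iff.mpr hdm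
    obtain ⟨z, ⟨hz1, hz2⟩, hz3⟩ := hs (Metric.ball s ‖d m‖) (Metric.ball_mem_nhds s hpos)
    have hy : z - s ≠ 0 := sub_ne_zero.mpr hz3
    have hylt : ‖z - s‖ < ‖d m‖ := by
      rw [← dist_eq_norm]; exact Metric.mem_ball.mp hz1
    apply key (z - s) hy hylt
    rw [add_sub_cancel]
    exact hz2
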